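/- For any integers a, t with t ≥ 4 and any b, P(a·t + b) = (ρ(a)² + σ(a))·P(a(t-2)+b) + (ρ(a)·σ(a) + 1)·P(a(t-3)+b) + ρ(a)·P(a(t-4)+b), where ρ(a) = 3·P(a-2) - P(a-4) and σ(a) = -ρ(-a). -/

import Mathlib

set_option maxHeartbeats 4000000

theorem padovan_iterated (P : ℤ → ℤ) (h0 : P 0 = 1) (h1 : P 1 = 1) (h2 : P 2 = 1)
    (hrec : ∀ n : ℤ, P (n + 3) = P (n + 1) + P n) (a b t : ℤ) (ht : 4 ≤ t) :
    P (a * t + b)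
      = ((3 * P (a - 2) - P (a - 4)) ^ 2 + (-(3 * P (-a - 2) - P (-a - 4)))) * P (a * (t - 2) + b)
        + ((3 * P (a - 2) - P (a - 4)) * (-(3 * P (-a - 2) - P (-a - 4))) + 1) * P (a * (t - 3) + b)
        + (3 * P (a - 2) - P (a - 4)) * P (a * (t - 4) + b) := by
  have pm1 : P (-1) = 0 := by linear_combination (norm := ring_nf) h2 - h0 - hrec (-1)
  have pm2h : P (-2) = 1 := by linear_combination (norm := ring_nf) h1 - pm1 - hrec (-2)
  have pm3h : P (-3) = 0 := by linear_combination (norm := ring_nf) h0 - pm2h - hrec (-3)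
  have pm4h : P (-4) = 0 := by linear_combination (norm := ring_nf) pm1 - pm3h - hrec (-4)
  have hL : ∀ m n : ℤ, P (n + m)
      = (P (m-2) - P (m-4)) * P n + P (m-3) * P (n+1) + P (m-4) * P (n+2) := by
    intro m
    induction m using Int.induction_on with
    | zero =>
      intro n
      linear_combination (norm := ring_nf) (- P n) * pm2h + P n * pm4h - P (n+1) * pm3h
        - P (n+2) * pm4h
    | succ i ih =>
      intro n
      linear_combination (norm := ring_nf) ih (n+1) + P ((i:ℤ)-4) * hrec n
        - P n * hrec ((i:ℤ)-4)
    | pred i ih =>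
      intro n
      linear_combination (norm := ring_nf) ih (n-1) - P (-(i:ℤ)-5) * hrec (n-1)
        + P (n-1) * hrec (-(i:ℤ)-5)
  have hN : ∀ a : ℤ, P (a-2)^3 - P (a-2)^2 * P (a-4) - P (a-2) * P (a-3)^2
      - 3 * P (a-2) * P (a-3) * P (a-4) + P (a-3)^3 + P (a-3)^2 * P (a-4)
      + 2 * P (a-3) * P (a-4)^2 + P (a-4)^3 = 1 := by
    intro a
    induction a using Int.induction_on with
    | zero =>
      linear_combination (norm := ring_nf)
        (P ((0:ℤ)-2)^2 + P ((0:ℤ)-2) + 1) * pm2h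
        + (P ((0:ℤ)-3)^2 + P ((0:ℤ)-3) * P ((0:ℤ)-4) - P ((0:ℤ)-2) * P ((0:ℤ)-3) - 3 * P ((0:ℤ)-2) * P ((0:ℤ)-4)) * pm3h
        + (P ((0:ℤ)-4)^2 + 2 * P ((0:ℤ)-3) * P ((0:ℤ)-4) - P ((0:ℤ)-2)^2) * pm4h
    | succ i ih =>
      linear_combination (norm := ring_nf) ih
        + (P ((i:ℤ)-1)^2 + P ((i:ℤ)-1) * P ((i:ℤ)-4) + P ((i:ℤ)-4)^2 + P ((i:ℤ)-3) * P ((i:ℤ)-4) - 3 * P ((i:ℤ)-2) * P ((i:ℤ)-3) - P ((i:ℤ)-2)^2) * hrec ((i:ℤ)-4)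
    | pred i ih =>
      linear_combination (norm := ring_nf) ih
        - (P (-(i:ℤ)-2)^2 + P (-(i:ℤ)-2) * P (-(i:ℤ)-5) + P (-(i:ℤ)-5)^2 + P (-(i:ℤ)-4) * P (-(i:ℤ)-5) - 3 * P (-(i:ℤ)-3) * P (-(i:ℤ)-4) - P (-(i:ℤ)-3)^2) * hrec (-(i:ℤ)-5)
  have key : ∀ a n : ℤ, P (n + 3*a)
      = (3 * P (a-2) - P (a-4)) * P (n + 2*a)
        + (-(3 * P (-a-2) - P (-a-4))) * P (n + a) + P n := by
    intro a n
    have hw1 := hL a n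
    have hw2 := hL (2*a) n
    have hw3 := hL (3*a) n
    have hs4 := hL a (a-4)
    have hs3 := hL a (a-3)
    have hs2 := hL a (a-2)
    have ht4 := hL a (2*a-4)
    have ht3 := hL a (2*a-3)
    have ht2 := hL a (2*a-2)
    have hI4 := hL a (-a-4)
    have hI3 := hL a (-a-3)
    have hI2 := hL a (-a-2)
    have hq1 := hrec (a-4)
    have hq0 := hrec (a-3)
    have hs1 := hrec (2*a-4)
    have hs0 := hrec (2*a-3)
    have hr1 := hrec (-a-4)
    have hr0 := hrec (-a-3)
    have hN := hN a
    linear_combination (norm := ring_nf) ((1)*(P (n+a))*(P (-a-4)) + (-3)*(P (n+a))*(P (-a-2)) + (1)*(P n)) * hN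
 + ((3)*(P (n+a))*(P (a-3))*(P (a-4)) + (1)*(P (n+a))*(P (a-3))*(P (a-3)) + (2)*(P (n+a))*(P (a-2))*(P (a-4)) + (-3)*(P (n+a))*(P (a-2))*(P (a-2))) * hI2
 + ((-2)*(P (n+a))*(P (a-4))*(P (a-4)) + (-2)*(P (n+a))*(P (a-3))*(P (a-4)) + (-3)*(P (n+a))*(P (a-3))*(P (a-3)) + (3)*(P (n+a))*(P (a-2))*(P (a-4)) + (2)*(P (n+a))*(P (a-2))*(P (a-3))) * hI3
 + ((-3)*(P (n+a))*(P (a-4))*(P (a-4)) + (-4)*(P (n+a))*(P (a-3))*(P (a-4)) + (-1)*(P (n+a))*(P (a-3))*(P (a-3)) + (3)*(P (n+a))*(P (a-2))*(P (a-3)) + (1)*(P (n+a))*(P (a-2))*(P (a-2))) * hI4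
 + ((-3)*(P (n+a))*(P (a-3))*(P (a-4)) + (-1)*(P (n+a))*(P (a-3))*(P (a-3)) + (-2)*(P (n+a))*(P (a-2))*(P (a-4)) + (3)*(P (n+a))*(P (a-2))*(P (a-2))) * pm2h
 + ((2)*(P (n+a))*(P (a-4))*(P (a-4)) + (2)*(P (n+a))*(P (a-3))*(P (a-4)) + (3)*(P (n+a))*(P (a-3))*(P (a-3)) + (-3)*(P (n+a))*(P (a-2))*(P (a-4)) + (-2)*(P (n+a))*(P (a-2))*(P (a-3))) * pm3h
 + ((3)*(P (n+a))*(P (a-4))*(P (a-4)) + (4)*(P (n+a))*(P (a-3))*(P (a-4)) + (1)*(P (n+a))*(P (a-3))*(P (a-3)) + (-3)*(P (n+a))*(P (a-2))*(P (a-3)) + (-1)*(P (n+a))*(P (a-2))*(P (a-2))) * pm4h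
 + ((1)) * hw3
 + ((1)*(P (a-4)) + (-3)*(P (a-2))) * hw2
 + ((2)*(P (a-4))*(P (a-4))*(P (a-4))*(P (-a-4)) + (2)*(P (a-4))*(P (a-4))*(P (a-4))*(P (-a-3)) + (-2)*(P (a-4))*(P (a-4))*(P (a-4))*(P (-a-1)) + (-3)*(P (a-3))*(P (a-4)) + (2)*(P (a-3))*(P (a-4))*(P (a-4))*(P (-a-4)) + (-1)*(P (a-3))*(P (a-4))*(P (a-4))*(P (-a-3)) + (-3)*(P (a-3))*(P (a-4))*(P (a-4))*(P (-a-2)) + (-2)*(P (a-3))*(P (a-4))*(P (a-4))*(P (-a-1)) + (3)*(P (a-3))*(P (a-4))*(P (a-4))*(P (-a)) + (-1)*(P (a-3))*(P (a-3)) + (-1)*(P (a-3))*(P (a-3))*(P (a-4))*(P (-a-3)) + (-1)*(P (a-3))*(P (a-3))*(P (a-4))*(P (-a-2)) + (1)*(P (a-3))*(P (a-3))*(P (a-4))*(P (-a)) + (-1)*(P (a-3))*(P (a-3))*(P (a-3))*(P (-a-4)) + (-1)*(P (a-3))*(P (a-3))*(P (a-3))*(P (-a-3)) + (1)*(P (a-3))*(P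 (a-3))*(P (a-3))*(P (-a-1)) + (-2)*(P (a-2))*(P (a-4)) + (-3)*(P (a-2))*(P (a-4))*(P (a-4))*(P (-a-4)) + (-5)*(P (a-2))*(P (a-4))*(P (a-4))*(P (-a-3)) + (-2)*(P (a-2))*(P (a-4))*(P (a-4))*(P (-a-2)) + (3)*(P (a-2))*(P (a-4))*(P (a-4))*(P (-a-1)) + (2)*(P (a-2))*(P (a-4))*(P (a-4))*(P (-a)) + (-4)*(P (a-2))*(P (a-3))*(P (a-4))*(P (-a-4)) + (-4)*(P (a-2))*(P (a-3))*(P (a-4))*(P (-a-3)) + (4)*(P (a-2))*(P (a-3))*(P (a-4))*(P (-a-1)) + (3)*(P (a-2))*(P (a-2)) + (3)*(P (a-2))*(P (a-2))*(P (a-4))*(P (-a-3)) + (3)*(P (a-2))*(P (a-2))*(P (a-4))*(P (-a-2)) + (-3)*(P (a-2))*(P (a-2))*(P (a-4))*(P (-a)) + (3)*(P (a-2))*(P (a-2))*(P (a-3))*(P (-a-4)) + (3)*(P (a-2))*(P (a-2))*(P (a-3))*(P (-a-3)) + (-3)*(P (a-2))*(P (a-2))*(P (a-3))*(P (-a-1)))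 * hw1
 + ((1)*(P n)) * ht2
 + ((1)*(P (n+1))) * ht3
 + ((1)*(P (n+2)) + (-1)*(P n)) * ht4
 + ((1)*(P n)*(P (a-4))) * hs0
 + ((1)*(P (n+1))*(P (a-4)) + (1)*(P n)*(P (a-3))) * hs1
 + ((1)*(P (n+2))*(P (a-4)) + (1)*(P (n+1))*(P (a-3)) + (-2)*(P n)*(P (a-2))) * hs2
 + ((1)*(P (n+2))*(P (a-3)) + (1)*(P (n+1))*(P (a-4)) + (-2)*(P (n+1))*(P (a-2)) + (1)*(P n)*(P (a-4))) * hs3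
 + ((-2)*(P (n+2))*(P (a-2)) + (1)*(P (n+1))*(P (a-4)) + (1)*(P n)*(P (a-3)) + (2)*(P n)*(P (a-2))) * hs4
 + ((1)*(P (n+2))*(P (a-4))*(P (a-4)) + (1)*(P (n+1))*(P (a-3))*(P (a-4)) + (-2)*(P n)*(P (a-2))*(P (a-4))) * hq0
 + ((2)*(P (n+2))*(P (a-3))*(P (a-4)) + (1)*(P (n+1))*(P (a-4))*(P (a-4)) + (1)*(P (n+1))*(P (a-3))*(P (a-3)) + (-2)*(P (n+1))*(P (a-2))*(P (a-4)) + (1)*(P n)*(P (a-4))*(P (a-4)) + (-2)*(P n)*(P (a-2))*(P (a-3))) * hq1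
 + ((3)*(P (n+2))*(P (a-3))*(P (a-4))*(P (a-4))*(P (a-4)) + (1)*(P (n+2))*(P (a-3))*(P (a-3))*(P (a-4))*(P (a-4)) + (2)*(P (n+2))*(P (a-2))*(P (a-4))*(P (a-4))*(P (a-4)) + (-3)*(P (n+2))*(P (a-2))*(P (a-2))*(P (a-4))*(P (a-4)) + (3)*(P (n+1))*(P (a-3))*(P (a-3))*(P (a-4))*(P (a-4)) + (1)*(P (n+1))*(P (a-3))*(P (a-3))*(P (a-3))*(P (a-4)) + (2)*(P (n+1))*(P (a-2))*(P (a-3))*(P (a-4))*(P (a-4)) + (-3)*(P (n+1))*(P (a-2))*(P (a-2))*(P (a-3))*(P (a-4)) + (-3)*(P n)*(P (a-3))*(P (a-4))*(P (a-4))*(P (a-4)) + (-1)*(P n)*(P (a-3))*(P (a-3))*(P (a-4))*(P (a-4)) + (-2)*(P n)*(P (a-2))*(P (a-4))*(P (a-4))*(P (a-4)) + (3)*(P n)*(P (a-2))*(P (a-3))*(P (a-4))*(P (a-4)) + (1)*(P n)*(P (a-2))*(P (a-3))*(P (a-3))*(P (a-4)) + (5)*(P n)*(P (a-2))*(P (a-2))*(P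 (a-4))*(P (a-4)) + (-3)*(P n)*(P (a-2))*(P (a-2))*(P (a-2))*(P (a-4))) * hr0
 + ((-2)*(P (n+2))*(P (a-4))*(P (a-4))*(P (a-4))*(P (a-4)) + (-2)*(P (n+2))*(P (a-3))*(P (a-4))*(P (a-4))*(P (a-4)) + (1)*(P (n+2))*(P (a-3))*(P (a-3))*(P (a-3))*(P (a-4)) + (3)*(P (n+2))*(P (a-2))*(P (a-4))*(P (a-4))*(P (a-4)) + (4)*(P (n+2))*(P (a-2))*(P (a-3))*(P (a-4))*(P (a-4)) + (-3)*(P (n+2))*(P (a-2))*(P (a-2))*(P (a-3))*(P (a-4)) + (-2)*(P (n+1))*(P (a-3))*(P (a-4))*(P (a-4))*(P (a-4)) + (-2)*(P (n+1))*(P (a-3))*(P (a-3))*(P (a-4))*(P (a-4)) + (1)*(P (n+1))*(P (a-3))*(P (a-3))*(P (a-3))*(P (a-3)) + (3)*(P (n+1))*(P (a-2))*(P (a-3))*(P (a-4))*(P (a-4)) + (4)*(P (n+1))*(P (a-2))*(P (a-3))*(P (a-3))*(P (a-4)) + (-3)*(P (n+1))*(P (a-2))*(P (a-2))*(P (a-3))*(P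 (a-3)) + (2)*(P n)*(P (a-4))*(P (a-4))*(P (a-4))*(P (a-4)) + (2)*(P n)*(P (a-3))*(P (a-4))*(P (a-4))*(P (a-4)) + (-1)*(P n)*(P (a-3))*(P (a-3))*(P (a-3))*(P (a-4)) + (-5)*(P n)*(P (a-2))*(P (a-4))*(P (a-4))*(P (a-4)) + (-6)*(P n)*(P (a-2))*(P (a-3))*(P (a-4))*(P (a-4)) + (1)*(P n)*(P (a-2))*(P (a-3))*(P (a-3))*(P (a-3)) + (3)*(P n)*(P (a-2))*(P (a-2))*(P (a-4))*(P (a-4)) + (7)*(P n)*(P (a-2))*(P (a-2))*(P (a-3))*(P (a-4)) + (-3)*(P n)*(P (a-2))*(P (a-2))*(P (a-2))*(P (a-3))) * hr1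
  have k1 := key a (a*(t-4)+b+a)
  have k2 := key a (a*(t-4)+b)
  linear_combination (norm := ring_nf) k1 + (3 * P (a-2) - P (a-4)) * k2
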